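/- arXiv:math/0505078 — 3 statements merged into one kernel-verified Lean document; each statement's English description precedes it below -/
import Mathlib

section
/- Let g : ℤ → ℂ be periodic with period m ≥ 1 and suppose the mean value M(g) = (1/m)∑_{n=0}^{m-1} g(n) equals 0. Then the Dirichlet series L(s,g) = ∑_{n=1}^∞ g(n) n^{-s} converges for every real s > 0. -/
open Filter

/-- If `g : ℤ → ℂ` is periodic with period `m ≥ 1` and has mean value zero, then the
Dirichlet series `L(s,g) = ∑_{n=1}^∞ g(n) n^{-s}` converges for every real `s > 0`. -/
theorem dirichlet_series_converges_of_mean_zero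
    (m : ℕ) (hm : 0 < m) (g : ℤ → ℂ)
    (hper : ∀ n : ℤ, g (n + m) = g n)
    (hM : (1 / (m : ℂ)) * ∑ n ∈ Finset.range m, g n = 0)
    (s : ℝ) (hs : 0 < s) :
    ∃ L : ℂ, Tendsto
      (fun N : ℕ => ∑ n ∈ Finset.range N,
        g ((n : ℤ) + 1) * (((((n : ℝ) + 1) ^ (-s) : ℝ)) : ℂ))
      atTop (nhds L) := by
  have hsum0 : ∑ n ∈ Finset.range m, g n = 0 := by
    have hne : (m : ℂ) ≠ 0 := Nat.cast_ne_zero.mpr hm.ne'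
    have := hM
    rw [one_div, mul_eq_zero] at this
    rcases this with h | h
    · exact absurd h (inv_ne_zero hne)
    · exact h
  -- shifting the period sum by one does not change it
  have hstep : ∀ a : ℤ, ∑ j ∈ Finset.range m, g (a + 1 + j)
      = ∑ j ∈ Finset.range m, g (a + j) := by
    intro a
    have h1 : ∑ j ∈ Finset.range m, g (a + 1 + j)
        = ∑ j ∈ Finset.range m, g (a + (j + 1)) := by
      apply Finset.sum_congr rfl; intro j _; congr 1; ring
    have h2 : ∑ j ∈ Finset.range (m + 1), g (a + j)
        = ∑ j ∈ Finset.range m, g (a + (j + 1)) + g (a + 0) := by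
      have := Finset.sum_range_succ' (fun j : ℕ => g (a + j)) m
      simpa using this
    have h3 : ∑ j ∈ Finset.range (m + 1), g (a + j)
        = ∑ j ∈ Finset.range m, g (a + j) + g (a + m) := by
      exact Finset.sum_range_succ (fun j : ℕ => g (a + j)) m
    have h4 : g (a + m) = g (a + 0) := by simpa using hper a
    have := h2.symm.trans h3
    rw [h4] at this
    rw [h1]
    exact add_right_cancel this
  -- the sum over any m consecutive integers starting at a natural number vanishes
  have hshift : ∀ N : ℕ, ∑ j ∈ Finset.range m, g ((N : ℤ) + j) = 0 := by
    intro N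
    induction N with
    | zero => simpa using hsum0
    | succ N ih =>
      have : ∑ j ∈ Finset.range m, g ((N : ℤ) + 1 + j) = 0 := by rw [hstep]; exact ih
      simpa [add_comm, add_left_comm, add_assoc] using this
  -- partial sums of g(n+1) are periodic, hence bounded
  set S : ℕ → ℂ := fun N => ∑ n ∈ Finset.range N, g ((n : ℤ) + 1) with hS
  have hSper : ∀ N, S (N + m) = S N := by
    intro N
    have := Finset.sum_range_add (fun n : ℕ => g ((n : ℤ) + 1)) N m
    rw [hS]
    simp only []
    rw [this]
    have hz : ∑ i ∈ Finset.range m, g ((↑(N + i) : ℤ) + 1) = 0 := by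
      have := hshift (N + 1)
      rw [← this]
      apply Finset.sum_congr rfl
      intro j _
      congr 1
      push_cast
      ring
    rw [hz, add_zero]
  have hSmod : ∀ N, S N = S (N % m) := by
    intro N
    conv_lhs => rw [← Nat.mod_add_div N m]
    generalize N / m = k
    induction k with
    | zero => simp
    | succ k ih =>
      have : N % m + m * (k + 1) = (N % m + m * k) + m := by ring
      rw [this, hSper, ih]
  obtain ⟨b, hb⟩ : ∃ b : ℝ, ∀ N, ‖S N‖ ≤ b := by
    refine ⟨(Finset.range m).sup' ⟨0, Finset.mem_range.mpr hm⟩ (fun r => ‖S r‖), fun N => ?_⟩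
    rw [hSmod N]
    exact Finset.le_sup' (fun r => ‖S r‖) (Finset.mem_range.mpr (Nat.mod_lt N hm))
  -- Dirichlet's test
  set f : ℕ → ℝ := fun n => ((n : ℝ) + 1) ^ (-s) with hf
  have hanti : Antitone f := by
    intro a c hac
    have h1 : ((a : ℝ) + 1) ≤ (c : ℝ) + 1 := by
      have : (a : ℝ) ≤ c := Nat.cast_le.mpr hac
      linarith
    exact Real.rpow_le_rpow_of_nonpos (by positivity) h1 (neg_nonpos.mpr hs.le)
  have hf0 : Tendsto f atTop (nhds 0) := by
    have h1 : Tendsto (fun n : ℕ => (n : ℝ) + 1) atTop atTop :=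
      tendsto_atTop_add_const_right _ 1 tendsto_natCast_atTop_atTop
    exact (tendsto_rpow_neg_atTop hs).comp h1
  have hcs : CauchySeq fun n => ∑ i ∈ Finset.range n, f i • g ((i : ℤ) + 1) :=
    hanti.cauchySeq_series_mul_of_tendsto_zero_of_bounded hf0 hb
  have hcs' : CauchySeq fun N : ℕ => ∑ n ∈ Finset.range N,
      g ((n : ℤ) + 1) * (((((n : ℝ) + 1) ^ (-s) : ℝ)) : ℂ) := by
    convert hcs using 2 with N
    apply Finset.sum_congr rfl
    intro n _
    rw [Complex.real_smul, mul_comm]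
  obtain ⟨L, hL⟩ := cauchySeq_tendsto_of_complete hcs'
  exact ⟨L, hL⟩
end

section
/- Let f : ℕ+ → ℂ with Dirichlet series F(s) = ∑_{n≥1} f(n) n^{-s} having abscissa of convergence σ_f < ∞. Let q be a nonnegative integer, s real with s > σ_f + 2q − 2, and y a nonzero real. With T_f(s,y) = ∑_{k≥1} f(k) k^{-s}/(k²+y²), one has T_f(s,y) = (−1)^q y^{−2q} T_f(s−2q, y) + ∑_{j=1}^{q} (−1)^{j+1} y^{−2j} F(s−2j+2). -/
open Filter

lemma one_step_aux
    (f : ℕ+ → ℂ) (σf : ℝ) (F : ℝ → ℂ) (T : ℝ → ℝ → ℂ)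
    (hF : ∀ s : ℝ, σf < s →
      Tendsto (fun N : ℕ => ∑ k ∈ Finset.range N,
        f ⟨k + 1, k.succ_pos⟩ * (((((k : ℝ) + 1) ^ (-s) : ℝ)) : ℂ))
        atTop (nhds (F s)))
    (hT : ∀ s y : ℝ, σf - 2 < s → y ≠ 0 →
      Tendsto (fun N : ℕ => ∑ k ∈ Finset.range N,
        f ⟨k + 1, k.succ_pos⟩ * (((((k : ℝ) + 1) ^ (-s) : ℝ)) : ℂ)
          / (((((k : ℝ) + 1) ^ 2 + y ^ 2 : ℝ)) : ℂ))
        atTop (nhds (T s y)))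
    (s y : ℝ) (hs : σf < s) (hy : y ≠ 0) :
    T s y = ((y : ℂ)) ^ (-2 : ℤ) * (F s - T (s - 2) y) := by
  have hyC : (y : ℂ) ≠ 0 := by exact_mod_cast hy
  have h1 := hF s hs
  have h2 := hT (s - 2) y (by linarith) hy
  have h3 := ((h1.sub h2).const_mul ((y : ℂ) ^ (-2 : ℤ)))
  have heq : (fun N : ℕ => ((y : ℂ) ^ (-2 : ℤ)) *
      ((∑ k ∈ Finset.range N,
        f ⟨k + 1, k.succ_pos⟩ * (((((k : ℝ) + 1) ^ (-s) : ℝ)) : ℂ)) -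
       ∑ k ∈ Finset.range N,
        f ⟨k + 1, k.succ_pos⟩ * (((((k : ℝ) + 1) ^ (-(s - 2)) : ℝ)) : ℂ)
          / (((((k : ℝ) + 1) ^ 2 + y ^ 2 : ℝ)) : ℂ)))
      = (fun N : ℕ => ∑ k ∈ Finset.range N,
        f ⟨k + 1, k.succ_pos⟩ * (((((k : ℝ) + 1) ^ (-s) : ℝ)) : ℂ)
          / (((((k : ℝ) + 1) ^ 2 + y ^ 2 : ℝ)) : ℂ)) := by
    funext N
    rw [← Finset.sum_sub_distrib, Finset.mul_sum]
    refine Finset.sum_congr rfl fun k _ => ?_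
    have hx : (0 : ℝ) < (k : ℝ) + 1 := by positivity
    have hr : ((k : ℝ) + 1) ^ (-(s - 2)) = ((k : ℝ) + 1) ^ (-s) * ((k : ℝ) + 1) ^ 2 := by
      rw [show -(s - 2) = -s + 2 by ring, Real.rpow_add hx]
      norm_num [Real.rpow_two]
    have hX : (((((k : ℝ) + 1) ^ 2 + y ^ 2 : ℝ)) : ℂ) ≠ 0 := by
      have : (0 : ℝ) < ((k : ℝ) + 1) ^ 2 + y ^ 2 := by positivity
      exact_mod_cast this.ne'
    rw [hr]
    have hX' : ((k:ℂ)+1)^2 + (y:ℂ)^2 ≠ 0 := by push_cast at hX; exact hX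
    push_cast
    have hy2 : ((y:ℂ))^2 ≠ 0 := pow_ne_zero 2 hyC
    have hzp : ((y:ℂ))^(-2:ℤ) = (((y:ℂ))^2)⁻¹ := by
      rw [zpow_neg, show ((2:ℤ)) = ((2:ℕ):ℤ) by norm_num, zpow_natCast]
    rw [hzp]
    rw [inv_mul_eq_iff_eq_mul₀ hy2, mul_div_assoc',
      eq_div_iff hX', sub_mul, div_mul_cancel₀ _ hX']
    ring
  rw [heq] at h3
  exact tendsto_nhds_unique (hT s y (by linarith) hy) h3

/-- Iterated recurrence (Lemma 2 of the paper):
`T_f(s,y) = (−1)^q y^{−2q} T_f(s−2q,y) + ∑_{j=1}^q (−1)^{j+1} y^{−2j} F(s−2j+2)`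
for `s > σ_f + 2q − 2` and `y ≠ 0`. -/
theorem T_iterated_recurrence
    (f : ℕ+ → ℂ) (σf : ℝ) (F : ℝ → ℂ) (T : ℝ → ℝ → ℂ)
    (hF : ∀ s : ℝ, σf < s →
      Tendsto (fun N : ℕ => ∑ k ∈ Finset.range N,
        f ⟨k + 1, k.succ_pos⟩ * (((((k : ℝ) + 1) ^ (-s) : ℝ)) : ℂ))
        atTop (nhds (F s)))
    (hT : ∀ s y : ℝ, σf - 2 < s → y ≠ 0 →
      Tendsto (fun N : ℕ => ∑ k ∈ Finset.range N,
        f ⟨k + 1, k.succ_pos⟩ * (((((k : ℝ) + 1) ^ (-s) : ℝ)) : ℂ)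
          / (((((k : ℝ) + 1) ^ 2 + y ^ 2 : ℝ)) : ℂ))
        atTop (nhds (T s y)))
    (q : ℕ) (s y : ℝ) (hs : σf + 2 * q - 2 < s) (hy : y ≠ 0) :
    T s y = (-1) ^ q * ((y : ℂ)) ^ (-(2 * q : ℤ)) * T (s - 2 * q) y
      + ∑ j ∈ Finset.Icc 1 q,
          (-1) ^ (j + 1) * ((y : ℂ)) ^ (-(2 * j : ℤ)) * F (s - 2 * j + 2) := by
  have hyC : (y : ℂ) ≠ 0 := by exact_mod_cast hy
  induction q generalizing s with
  | zero => simp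
  | succ q ih =>
    have hq : σf + 2 * q - 2 < s := by push_cast at hs ⊢; linarith
    have hsq : σf < s - 2 * q := by push_cast at hs; linarith
    have hstep := one_step_aux f σf F T hF hT (s - 2 * q) y hsq hy
    rw [ih s hq, hstep]
    rw [Finset.sum_Icc_succ_top (by omega : 1 ≤ q + 1)]
    have h1 : s - 2 * q - 2 = s - 2 * (q + 1 : ℕ) := by push_cast; ring
    have h2 : s - 2 * ((q:ℕ) + 1 : ℕ) + 2 = s - 2 * q := by push_cast; ring
    rw [h1, h2]
    have hz : ((y:ℂ)) ^ (-(2 * ((q:ℕ) + 1) : ℤ)) = (y:ℂ) ^ (-(2 * q : ℤ)) * (y:ℂ) ^ (-2 : ℤ) := by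
      rw [← zpow_add₀ hyC]; ring_nf
    push_cast [hz]
    ring
end

section
/- For a positive integer m, integer u with 0 < u < m, r = u/m, and any real λ > 0: (1/m) ∑_{k=0}^{m−1} cos(2πkr) coth((λ + πik)/m) = cosh((1−2r)λ)/sinh(λ). -/
/-- The complex hyperbolic cotangent. -/
noncomputable def Complex.coth (z : ℂ) : ℂ := Complex.cosh z / Complex.sinh z

open Complex Finset

lemma key_sum (m a : ℕ) (ha : 0 < a) (ham : a < m) (ζ c : ℂ)
    (hζ : IsPrimitiveRoot ζ m) (hc : c ^ m ≠ 1) :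
    ∑ k ∈ Finset.range m, ζ ^ (k * a) / (c * ζ ^ k - 1)
      = (m : ℂ) * c ^ (m - a) / (c ^ m - 1) := by
  have hm : 0 < m := ha.trans ham
  have hζm : ζ ^ m = 1 := hζ.pow_eq_one
  have hD : c ^ m - 1 ≠ 0 := sub_ne_zero.mpr hc
  have step : ∀ k ∈ Finset.range m,
      ζ ^ (k * a) / (c * ζ ^ k - 1)
        = (∑ n ∈ Finset.range m, c ^ n * (ζ ^ (a + n)) ^ k) / (c ^ m - 1) := by
    intro k hk
    have hpow : (c * ζ ^ k) ^ m = c ^ m := by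
      rw [mul_pow, ← pow_mul, mul_comm k m, pow_mul, hζm, one_pow, mul_one]
    have hne : c * ζ ^ k - 1 ≠ 0 := by
      intro h
      apply hc
      have h1 : c * ζ ^ k = 1 := by linear_combination h
      rw [← hpow, h1, one_pow]
    have hgeom : (c * ζ ^ k - 1) * ∑ n ∈ Finset.range m, (c * ζ ^ k) ^ n
        = c ^ m - 1 := by rw [mul_comm, geom_sum_mul, hpow]
    rw [div_eq_div_iff hne hD, ← hgeom, Finset.mul_sum, Finset.sum_mul, Finset.mul_sum]
    apply Finset.sum_congr rfl
    intro n _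
    rw [← pow_mul, show (a+n)*k = k*a + k*n by ring, pow_add]
    ring
  rw [Finset.sum_congr rfl step, ← Finset.sum_div, Finset.sum_comm]
  congr 1
  have hroot : ∀ j : ℕ, ∑ k ∈ Finset.range m, (ζ ^ j) ^ k
      = if m ∣ j then (m : ℂ) else 0 := by
    intro j
    by_cases hj : m ∣ j
    · rw [if_pos hj, (hζ.pow_eq_one_iff_dvd j).mpr hj]
      simp
    · rw [if_neg hj, geom_sum_eq (fun h => hj ((hζ.pow_eq_one_iff_dvd j).mp h)),
        ← pow_mul, mul_comm j m, pow_mul, hζm, one_pow, sub_self, zero_div]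
  have : ∀ n ∈ Finset.range m, (∑ k ∈ Finset.range m, c ^ n * (ζ ^ (a + n)) ^ k)
      = c ^ n * (if m ∣ a + n then (m : ℂ) else 0) := by
    intro n _
    rw [← Finset.mul_sum, hroot]
  rw [Finset.sum_congr rfl this, Finset.sum_eq_single (m - a)]
  · have : m ∣ a + (m - a) := by
      have : a + (m - a) = m := by omega
      rw [this]
    rw [if_pos this, mul_comm]
  · intro n hn hne
    have : ¬ m ∣ a + n := by
      intro hdvd
      obtain ⟨t, ht⟩ := hdvd
      have h1 : a + n < 2 * m := by
        have := Finset.mem_range.mp hn; omega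
      have h2 : 0 < a + n := by omega
      have ht1 : t = 1 := by nlinarith
      rw [ht1, mul_one] at ht
      omega
    rw [if_neg this, mul_zero]
  · intro h
    exfalso; apply h; exact Finset.mem_range.mpr (by omega)


set_option maxHeartbeats 1000000 in
/-- The finite identity used in the proof of Corollary 4: for `0 < u < m`, `r = u/m`
and `λ > 0`, `(1/m) ∑_{k=0}^{m−1} cos(2πkr) coth((λ+πik)/m) = cosh((1−2r)λ)/sinh(λ)`. -/
theorem cos_coth_sum
    (m : ℕ) (hm : 0 < m) (u : ℕ) (hu : 0 < u) (hum : u < m)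
    (lam : ℝ) (hlam : 0 < lam) :
    (1 / (m : ℂ)) * ∑ k ∈ Finset.range m,
      ((Real.cos (2 * Real.pi * k * ((u : ℝ) / m)) : ℝ) : ℂ)
        * Complex.coth (((lam : ℂ) + Real.pi * (k : ℂ) * Complex.I) / (m : ℂ))
    = (((Real.cosh ((1 - 2 * ((u : ℝ) / m)) * lam) / Real.sinh lam : ℝ)) : ℂ) := by
  have hmC : (m : ℂ) ≠ 0 := Nat.cast_ne_zero.mpr hm.ne'
  have hmR : (m : ℝ) ≠ 0 := Nat.cast_ne_zero.mpr hm.ne'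
  set ζ : ℂ := Complex.exp (2 * Real.pi * I / m) with hζdef
  have hζprim : IsPrimitiveRoot ζ m := Complex.isPrimitiveRoot_exp m hm.ne'
  have hζm : ζ ^ m = 1 := hζprim.pow_eq_one
  set c : ℂ := Complex.exp (2 * lam / m) with hcdef
  have hcm : c ^ m = Complex.exp (2 * lam) := by
    rw [hcdef, ← Complex.exp_nat_mul]
    congr 1
    field_simp
  have hcm1 : c ^ m ≠ 1 := by
    rw [hcm, show ((2 : ℂ) * lam) = ((2 * lam : ℝ) : ℂ) by push_cast; ring,
      ← Complex.ofReal_exp]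
    intro h
    rw [show (1 : ℂ) = ((1 : ℝ) : ℂ) by norm_num] at h
    have := Complex.ofReal_injective h
    rw [Real.exp_eq_one_iff] at this
    linarith
  have hD : c ^ m - 1 ≠ 0 := sub_ne_zero.mpr hcm1
  -- per-term rewrite
  have hterm : ∀ k ∈ Finset.range m,
      ((Real.cos (2 * Real.pi * k * ((u : ℝ) / m)) : ℝ) : ℂ)
        * Complex.coth (((lam : ℂ) + Real.pi * (k : ℂ) * Complex.I) / (m : ℂ))
      = ζ ^ (k * u) / 2 + ζ ^ (k * (m - u)) / 2
        + ζ ^ (k * u) / (c * ζ ^ k - 1) + ζ ^ (k * (m - u)) / (c * ζ ^ k - 1) := by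
    intro k _
    set w : ℂ := ((lam : ℂ) + Real.pi * (k : ℂ) * Complex.I) / (m : ℂ) with hw
    have hz : c * ζ ^ k = Complex.exp (2 * w) := by
      rw [hcdef, hζdef, ← Complex.exp_nat_mul, ← Complex.exp_add]
      congr 1
      rw [hw]
      field_simp
    have hzm : (c * ζ ^ k) ^ m = c ^ m := by
      rw [mul_pow, ← pow_mul, mul_comm k m, pow_mul, hζm, one_pow, mul_one]
    have hzne : c * ζ ^ k ≠ 1 := by
      intro h
      apply hcm1
      rw [← hzm, h, one_pow]
    have hzne' : c * ζ ^ k - 1 ≠ 0 := sub_ne_zero.mpr hzne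
    -- coth
    set x : ℂ := Complex.exp w with hx
    have hx0 : x ≠ 0 := Complex.exp_ne_zero w
    have hx2 : x * x = c * ζ ^ k := by
      rw [hx, ← Complex.exp_add, hz]
      congr 1
      ring
    have hden : x - x⁻¹ ≠ 0 := by
      intro h
      apply hzne
      rw [← hx2]
      rw [sub_eq_zero] at h
      nth_rw 2 [h]
      exact mul_inv_cancel₀ hx0
    have hz2 : x * x - 1 ≠ 0 := by rw [hx2]; exact hzne'
    have hcoth : Complex.coth w = (c * ζ ^ k + 1) / (c * ζ ^ k - 1) := by
      rw [Complex.coth, Complex.cosh, Complex.sinh, Complex.exp_neg, ← hx, ← hx2]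
      field_simp
    -- cos
    have hc1 : Complex.exp (((2 * Real.pi * k * ((u : ℝ) / m) : ℝ) : ℂ) * I)
        = ζ ^ (k * u) := by
      rw [hζdef, ← Complex.exp_nat_mul]
      congr 1
      push_cast
      field_simp
    have hc2 : Complex.exp (-((2 * Real.pi * k * ((u : ℝ) / m) : ℝ) : ℂ) * I)
        = ζ ^ (k * (m - u)) := by
      rw [hζdef, ← Complex.exp_nat_mul,
        show ((k * (m - u) : ℕ) : ℂ) * (2 * (Real.pi : ℂ) * I / m)
          = -((2 * Real.pi * k * ((u : ℝ) / m) : ℝ) : ℂ) * I + (k : ℂ) * (2 * Real.pi * I) by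
          push_cast [Nat.cast_sub hum.le]
          field_simp
          ring,
        Complex.exp_add, Complex.exp_nat_mul_two_pi_mul_I, mul_one]
    have hcos : ((Real.cos (2 * Real.pi * k * ((u : ℝ) / m)) : ℝ) : ℂ)
        = (ζ ^ (k * u) + ζ ^ (k * (m - u))) / 2 := by
      rw [Complex.ofReal_cos, Complex.cos, hc1, hc2]
    rw [hcos, hcoth]
    field_simp
    ring
  rw [Finset.sum_congr rfl hterm]
  rw [Finset.sum_add_distrib, Finset.sum_add_distrib, Finset.sum_add_distrib]
  have hS0 : ∀ a : ℕ, 0 < a → a < m → ∑ k ∈ Finset.range m, ζ ^ (k * a) / 2 = 0 := by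
    intro a ha ham
    rw [← Finset.sum_div]
    have : ∑ k ∈ Finset.range m, ζ ^ (k * a) = 0 := by
      have he : ∀ k, ζ ^ (k * a) = (ζ ^ a) ^ k := by
        intro k; rw [← pow_mul, mul_comm]
      simp_rw [he]
      rw [geom_sum_eq (hζprim.pow_ne_one_of_pos_of_lt ha.ne' ham), ← pow_mul,
        mul_comm a m, pow_mul, hζm, one_pow, sub_self, zero_div]
    rw [this, zero_div]
  rw [hS0 u hu hum, hS0 (m - u) (by omega) (by omega),
    key_sum m u hu hum ζ c hζprim hcm1,
    key_sum m (m - u) (by omega) (by omega) ζ c hζprim hcm1]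
  rw [show m - (m - u) = u by omega]
  -- now: (1/m) * (0 + 0 + m c^{m-u}/D + m c^u/D) = RHS
  set t : ℂ := Complex.exp (lam : ℂ) with ht
  set s : ℂ := Complex.exp ((lam : ℂ) * u / m) with hs
  have ht0 : t ≠ 0 := Complex.exp_ne_zero _
  have hs0 : s ≠ 0 := Complex.exp_ne_zero _
  have hcu : c ^ u = s * s := by
    rw [hcdef, ← Complex.exp_nat_mul, hs, ← Complex.exp_add]
    congr 1
    field_simp
    ring
  have hcmu : c ^ (m - u) * (s * s) = t * t := by
    rw [hcdef, hs, ht, ← Complex.exp_nat_mul, ← Complex.exp_add, ← Complex.exp_add,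
      ← Complex.exp_add]
    congr 1
    push_cast [Nat.cast_sub hum.le]
    field_simp
    ring
  have hcmuv : c ^ (m - u) = t * t / (s * s) :=
    (eq_div_iff (mul_ne_zero hs0 hs0)).mpr hcmu
  have hcmtt : c ^ m = t * t := by
    rw [hcm, ht, ← Complex.exp_add]
    congr 1
    push_cast
    ring
  have hE : Complex.exp ((1 - 2 * ((u : ℂ) / (m : ℂ))) * (lam : ℂ)) * (s * s) = t := by
    rw [hs, ht, ← Complex.exp_add, ← Complex.exp_add]
    congr 1
    field_simp
    ring
  have hEv : Complex.exp ((1 - 2 * ((u : ℂ) / (m : ℂ))) * (lam : ℂ)) = t / (s * s) :=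
    (eq_div_iff (mul_ne_zero hs0 hs0)).mpr hE
  have htt1 : t * t - 1 ≠ 0 := by rw [← hcmtt]; exact hD
  have hden2 : t - t⁻¹ ≠ 0 := by
    intro h
    apply htt1
    rw [sub_eq_zero] at h
    nth_rw 2 [h]
    rw [mul_inv_cancel₀ ht0]
    ring
  have htinv : t - t⁻¹ = (t * t - 1) / t := by
    rw [eq_div_iff ht0]
    field_simp
  rw [Real.cosh_eq, Real.sinh_eq]
  push_cast
  rw [Complex.exp_neg, Complex.exp_neg, hEv, ← ht, hcmuv, hcu, hcmtt, inv_div, htinv]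
  obtain ⟨D, hDdef⟩ : ∃ D : ℂ, D = t * t - 1 := ⟨_, rfl⟩
  have hDne : D ≠ 0 := by rw [hDdef]; exact htt1
  rw [← hDdef]
  field_simp
  ring
end
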